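/- Carter's Lemma: let (W,S) be a finite Coxeter group realized as a reflection group on a Euclidean space V. Then for every w ∈ W, the absolute length ℓ(w) (the minimal number of reflections whose product is w) equals dim Im(id − w). Moreover, an expression w = s_{a_1}⋯s_{a_r} as a product of reflections is reduced (r = ℓ(w)) if and only if the roots a_1,…,a_r are linearly independent. -/

import Mathlib

open scoped RealInnerProductSpace

/-- The reflection in a root `a`: `s_a(x) = x - 2(⟪x,a⟫/⟪a,a⟫) • a`. -/
noncomputable def sR {V : Type} [NormedAddCommGroup V] [InnerProductSpace ℝ V]
    (a x : V) : V :=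
  x - (2 * ⟪x, a⟫ / ⟪a, a⟫) • a

/-- A linear automorphism is a reflection if it is given by `s_a` for some nonzero root `a`. -/
def IsReflAuto {V : Type} [NormedAddCommGroup V] [InnerProductSpace ℝ V]
    (g : V ≃ₗ[ℝ] V) : Prop :=
  ∃ a : V, a ≠ 0 ∧ ∀ x, g x = sR a x

/-- The absolute length of `w` relative to the reflections lying in the group `G`:
the minimal number of reflections of `G` whose product is `w`. -/
noncomputable def absLen {V : Type} [NormedAddCommGroup V] [InnerProductSpace ℝ V]
    (G : Subgroup (V ≃ₗ[ℝ] V)) (w : V ≃ₗ[ℝ] V) : ℕ :=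
  sInf {r : ℕ | ∃ l : List (V ≃ₗ[ℝ] V),
    l.length = r ∧ (∀ t ∈ l, t ∈ G ∧ IsReflAuto t) ∧ l.prod = w}


open Module Submodule

set_option linter.unusedSectionVars false
set_option linter.unusedVariables false

namespace Carter

variable {V : Type} [NormedAddCommGroup V] [InnerProductSpace ℝ V]

lemma sR_zero (x : V) : sR (0 : V) x = x := by
  simp [sR]

lemma sR_add (a x y : V) : sR a (x + y) = sR a x + sR a y := by
  rcases eq_or_ne a 0 with rfl | h
  · simp [sR_zero]
  · have ha : ⟪a, a⟫ ≠ 0 := by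
      exact (inner_self_ne_zero (𝕜 := ℝ)).2 h
    simp only [sR, inner_add_left]
    rw [show (2 * (⟪x,a⟫ + ⟪y,a⟫) / ⟪a,a⟫) = 2*⟪x,a⟫/⟪a,a⟫ + 2*⟪y,a⟫/⟪a,a⟫ by ring,
      add_smul]
    abel

lemma sR_smul (a : V) (c : ℝ) (x : V) : sR a (c • x) = c • sR a x := by
  rcases eq_or_ne a 0 with rfl | h
  · simp [sR_zero]
  · simp only [sR, real_inner_smul_left, smul_sub, smul_smul]
    congr 2
    ring

/-- `sR a` as a linear map. -/
noncomputable def sL (a : V) : V →ₗ[ℝ] V where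
  toFun := sR a
  map_add' := sR_add a
  map_smul' := sR_smul a

@[simp] lemma sL_apply (a x : V) : sL a x = sR a x := rfl

lemma inner_sR_right (a x : V) : ⟪sR a x, a⟫ = -⟪x, a⟫ := by
  rcases eq_or_ne a 0 with rfl | h
  · simp
  · have ha : ⟪a, a⟫ ≠ 0 := (inner_self_ne_zero (𝕜 := ℝ)).2 h
    simp only [sR, inner_sub_left, real_inner_smul_left]
    field_simp
    ring

lemma sR_sR (a x : V) : sR a (sR a x) = x := by
  rcases eq_or_ne a 0 with rfl | h
  · simp [sR_zero]
  · have ha : ⟪a, a⟫ ≠ 0 := (inner_self_ne_zero (𝕜 := ℝ)).2 h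
    conv_lhs => rw [sR, inner_sR_right]
    rw [sR]
    rw [show 2 * -⟪x,a⟫ / ⟪a,a⟫ = -(2*⟪x,a⟫/⟪a,a⟫) by ring, neg_smul]
    abel

/-- `sR a` as a linear automorphism. -/
noncomputable def rA (a : V) : V ≃ₗ[ℝ] V :=
  LinearEquiv.ofLinear (sL a) (sL a)
    (by ext x; simp [sR_sR]) (by ext x; simp [sR_sR])

@[simp] lemma rA_apply (a x : V) : rA a x = sR a x := rfl

lemma rA_mul_self (a : V) : rA a * rA a = 1 := by
  ext x
  exact sR_sR a x

lemma sR_inner (a x y : V) : ⟪sR a x, sR a y⟫ = ⟪x, y⟫ := by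
  rcases eq_or_ne a 0 with rfl | h
  · simp [sR_zero]
  · have ha : ⟪a, a⟫ ≠ 0 := (inner_self_ne_zero (𝕜 := ℝ)).2 h
    simp only [sR, inner_sub_left, inner_sub_right, real_inner_smul_left,
      real_inner_smul_right]
    have hsymm : ⟪y, a⟫ = ⟪a, y⟫ := real_inner_comm _ _
    have hsymm2 : ⟪x, a⟫ = ⟪a, x⟫ := real_inner_comm _ _
    field_simp
    ring_nf
    rw [real_inner_comm a x, real_inner_comm a y]
    ring

lemma sR_of_inner_eq_zero {a x : V} (h : ⟪x, a⟫ = 0) : sR a x = x := by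
  simp [sR, h]

lemma inner_eq_zero_of_sR_fix {a x : V} (ha : a ≠ 0) (h : sR a x = x) : ⟪x, a⟫ = 0 := by
  have hinner : ⟪a, a⟫ ≠ 0 := (inner_self_ne_zero (𝕜 := ℝ)).2 ha
  have : (2 * ⟪x, a⟫ / ⟪a, a⟫) • a = 0 := by
    have := h
    rw [sR] at this
    have h2 : x - (2 * ⟪x, a⟫ / ⟪a, a⟫) • a - x = 0 := by rw [this]; abel
    rw [sub_sub_cancel_left] at h2
    simpa using h2
  rcases smul_eq_zero.1 this with hc | hc
  · rw [div_eq_zero_iff] at hc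
    rcases hc with hc | hc
    · linarith
    · exact absurd hc hinner
  · exact absurd hc ha

lemma sR_self (a : V) (ha : a ≠ 0) : sR a a = -a := by
  have hinner : ⟪a, a⟫ ≠ 0 := (inner_self_ne_zero (𝕜 := ℝ)).2 ha
  rw [sR]
  rw [show 2 * ⟪a,a⟫ / ⟪a,a⟫ = 2 by field_simp]
  rw [two_smul]; abel

lemma sR_smul_root {a : V} {t : ℝ} (ht : t ≠ 0) (x : V) : sR (t • a) x = sR a x := by
  rcases eq_or_ne a 0 with rfl | h
  · simp [sR_zero]
  · simp only [sR, real_inner_smul_right, real_inner_smul_left, smul_smul]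
    congr 1
    have ha : ⟪a, a⟫ ≠ 0 := (inner_self_ne_zero (𝕜 := ℝ)).2 h
    have hc : 2 * (t * ⟪x,a⟫) / (t * (t * ⟪a,a⟫)) * t = 2 * ⟪x,a⟫ / ⟪a,a⟫ := by
      field_simp
    rw [hc]

lemma sR_neg_root (a x : V) : sR (-a) x = sR a x := by
  rw [show -a = (-1 : ℝ) • a by simp]
  exact sR_smul_root (by norm_num) x

lemma sub_sR_mem_span (a x : V) : x - sR a x ∈ (ℝ ∙ a) := by
  rw [sR, sub_sub_cancel]
  exact smul_mem _ _ (mem_span_singleton_self a)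

/-- Conjugation: if `g` preserves inner products then `g ∘ sR a ∘ g⁻¹ = sR (g a)`. -/
lemma sR_conj {g : V ≃ₗ[ℝ] V} (hg : ∀ x y : V, ⟪g x, g y⟫ = ⟪x, y⟫) (a x : V) :
    g (sR a x) = sR (g a) (g x) := by
  simp only [sR, map_sub, map_smul, hg]


variable {V : Type} [NormedAddCommGroup V] [InnerProductSpace ℝ V]

/-- Product (composition) of reflections along a list of roots. -/
noncomputable def prodS (l : List V) (x : V) : V := l.foldr sR x

@[simp] lemma prodS_nil (x : V) : prodS ([] : List V) x = x := rfl

@[simp] lemma prodS_cons (a : V) (l : List V) (x : V) :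
    prodS (a :: l) x = sR a (prodS l x) := rfl

lemma sub_prodS_mem_span (l : List V) (x : V) :
    x - prodS l x ∈ span ℝ {b : V | b ∈ l} := by
  induction l generalizing x with
  | nil => simp
  | cons a t ih =>
    have h1 : x - prodS t x ∈ span ℝ {b : V | b ∈ t} := ih x
    have h2 : prodS t x - sR a (prodS t x) ∈ (ℝ ∙ a) := sub_sR_mem_span a _
    have hle1 : span ℝ {b : V | b ∈ t} ≤ span ℝ {b : V | b ∈ a :: t} :=
      span_mono (fun b hb => by simp [List.mem_cons]; right; exact hb)
    have hle2 : (ℝ ∙ a) ≤ span ℝ {b : V | b ∈ a :: t} :=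
      span_mono (fun b hb => by simp at hb; subst hb; simp)
    have := add_mem (hle1 h1) (hle2 h2)
    simpa [prodS_cons, sub_add_sub_cancel] using this

lemma prodS_fix_of_orth (l : List V) (x : V) (h : ∀ b ∈ l, ⟪x, b⟫ = 0) :
    prodS l x = x := by
  induction l with
  | nil => rfl
  | cons a t ih =>
    rw [prodS_cons, ih (fun b hb => h b (List.mem_cons_of_mem _ hb))]
    exact sR_of_inner_eq_zero (h a (List.mem_cons_self))

lemma prodS_ofFn_fix {r : ℕ} (a : Fin r → V) (ha : LinearIndependent ℝ a) (x : V)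
    (hfix : prodS (List.ofFn a) x = x) : ∀ i, ⟪x, a i⟫ = 0 := by
  induction r with
  | zero => exact fun i => absurd i.2 (by omega)
  | succ n ih =>
    rw [← Fin.cons_self_tail a] at ha
    rw [linearIndependent_fin_cons] at ha
    obtain ⟨htail, hnotmem⟩ := ha
    have ha0 : a 0 ≠ 0 := by
      intro hc
      apply hnotmem
      rw [hc]
      exact zero_mem _
    have hexp : prodS (List.ofFn a) x = sR (a 0) (prodS (List.ofFn (Fin.tail a)) x) := by
      rw [List.ofFn_succ]
      rfl
    set y := prodS (List.ofFn (Fin.tail a)) x with hy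
    have hxy : sR (a 0) y = x := by rw [← hexp, hfix]
    have hyx : y = sR (a 0) x := by rw [← hxy, sR_sR]
    have hmem : x - y ∈ span ℝ (Set.range (Fin.tail a)) := by
      have := sub_prodS_mem_span (List.ofFn (Fin.tail a)) x
      have hset : {b : V | b ∈ List.ofFn (Fin.tail a)} = Set.range (Fin.tail a) := by
        ext b; simp [List.mem_ofFn]
      rwa [hset] at this
    have hdiff : x - y = (2 * ⟪x, a 0⟫ / ⟪a 0, a 0⟫) • a 0 := by
      rw [hyx, sR, sub_sub_cancel]
    have hc0 : 2 * ⟪x, a 0⟫ / ⟪a 0, a 0⟫ = 0 := by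
      by_contra hc
      apply hnotmem
      have : a 0 = (2 * ⟪x, a 0⟫ / ⟪a 0, a 0⟫)⁻¹ • (x - y) := by
        rw [hdiff, smul_smul, inv_mul_cancel₀ hc, one_smul]
      rw [this]
      exact smul_mem _ _ hmem
    have hinner0 : ⟪x, a 0⟫ = 0 := by
      have hinner : ⟪a 0, a 0⟫ ≠ 0 := (inner_self_ne_zero (𝕜 := ℝ)).2 ha0
      rw [div_eq_zero_iff] at hc0
      rcases hc0 with hc | hc
      · linarith
      · exact absurd hc hinner
    have hyeq : y = x := by
      rw [hyx, sR_of_inner_eq_zero hinner0]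
    have hfixt : prodS (List.ofFn (Fin.tail a)) x = x := by
      rw [← hy]; exact hyeq
    have htailres := ih (Fin.tail a) htail hfixt
    intro i
    rcases Fin.eq_zero_or_eq_succ i with rfl | ⟨j, rfl⟩
    · exact hinner0
    · exact htailres j

section FinDim

variable [FiniteDimensional ℝ V]

/-- rank lemma: a product of reflections with independent roots has
`ker (1 - w) = (span roots)ᗮ` and rank `r`. -/
lemma rank_eq_of_indep {r : ℕ} (a : Fin r → V) (ha : LinearIndependent ℝ a)
    (w : V ≃ₗ[ℝ] V) (hw : ∀ x, w x = prodS (List.ofFn a) x) :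
    finrank ℝ (LinearMap.range (LinearMap.id - (w : V →ₗ[ℝ] V))) = r := by
  set f : V →ₗ[ℝ] V := LinearMap.id - (w : V →ₗ[ℝ] V) with hf
  have hfapp : ∀ x, f x = x - w x := fun x => rfl
  have hker : LinearMap.ker f = (span ℝ (Set.range a))ᗮ := by
    ext x
    constructor
    · intro hx
      have hfix : w x = x := by
        have := LinearMap.mem_ker.1 hx
        rw [hfapp, sub_eq_zero] at this
        exact this.symm
      have horth := prodS_ofFn_fix a ha x (by rw [← hw]; exact hfix)
      intro u hu
      induction hu using span_induction with
      | mem u hu =>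
        obtain ⟨i, rfl⟩ := hu
        rw [real_inner_comm]
        exact horth i
      | zero => simp
      | add u v _ _ h1 h2 => rw [inner_add_left, h1, h2, add_zero]
      | smul c u _ h1 => rw [real_inner_smul_left, h1, mul_zero]
    · intro hx
      rw [LinearMap.mem_ker, hfapp, sub_eq_zero, hw]
      exact (prodS_fix_of_orth _ _ (fun b hb => by
        rw [List.mem_ofFn] at hb
        obtain ⟨i, rfl⟩ := hb
        rw [real_inner_comm]
        exact hx (a i) (subset_span (Set.mem_range_self i)))).symm
  have hspan : finrank ℝ (span ℝ (Set.range a)) = r := by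
    rw [finrank_span_eq_card ha, Fintype.card_fin]
  have hrn := LinearMap.finrank_range_add_finrank_ker f
  have horth := Submodule.finrank_add_finrank_orthogonal (span ℝ (Set.range a))
  rw [hker] at hrn
  omega

/-- Inner-product preservation. -/
def IP (g : V ≃ₗ[ℝ] V) : Prop := ∀ x y : V, ⟪g x, g y⟫ = ⟪x, y⟫

lemma IP_rA (a : V) : IP (rA a) := fun x y => sR_inner a x y

lemma IP_one : IP (1 : V ≃ₗ[ℝ] V) := fun x y => rfl

lemma IP_mul {g h : V ≃ₗ[ℝ] V} (hg : IP g) (hh : IP h) : IP (g * h) := by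
  intro x y
  have : (g * h) x = g (h x) := rfl
  rw [this, show (g * h) y = g (h y) from rfl, hg, hh]

lemma IP_inv {g : V ≃ₗ[ℝ] V} (hg : IP g) : IP g⁻¹ := by
  intro x y
  have h1 : g (g⁻¹ x) = x := g.apply_symm_apply x
  have h2 : g (g⁻¹ y) = y := g.apply_symm_apply y
  calc ⟪g⁻¹ x, g⁻¹ y⟫ = ⟪g (g⁻¹ x), g (g⁻¹ y)⟫ := (hg _ _).symm
    _ = ⟪x, y⟫ := by rw [h1, h2]

lemma IP_of_mem {G : Subgroup (V ≃ₗ[ℝ] V)}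
    (hgen : Subgroup.closure {t : V ≃ₗ[ℝ] V | t ∈ G ∧ IsReflAuto t} = G)
    {g : V ≃ₗ[ℝ] V} (hg : g ∈ G) : IP g := by
  rw [← hgen] at hg
  induction hg using Subgroup.closure_induction with
  | mem t ht =>
    obtain ⟨-, b, hb, hbt⟩ := ht
    intro x y
    rw [hbt, hbt]
    exact sR_inner b x y
  | one => exact IP_one
  | mul x y _ _ hx hy => exact IP_mul hx hy
  | inv x _ hx => exact IP_inv hx

lemma IP_norm {g : V ≃ₗ[ℝ] V} (hg : IP g) (x : V) : ‖g x‖ = ‖x‖ := by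
  have := hg x x
  rw [real_inner_self_eq_norm_sq, real_inner_self_eq_norm_sq] at this
  have h1 : ‖g x‖ ≥ 0 := norm_nonneg _
  have h2 : ‖x‖ ≥ 0 := norm_nonneg _
  nlinarith

/-- For inner-preserving `w`, the image of `1 - w` is orthogonal to its kernel. -/
lemma range_orth_ker {w : V ≃ₗ[ℝ] V} (hw : IP w) :
    ∀ u ∈ LinearMap.range (LinearMap.id - (w : V →ₗ[ℝ] V)),
    ∀ v ∈ LinearMap.ker (LinearMap.id - (w : V →ₗ[ℝ] V)), ⟪u, v⟫ = 0 := by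
  rintro u ⟨x, rfl⟩ v hv
  have hvfix : w v = v := by
    have := LinearMap.mem_ker.1 hv
    have h2 : v - w v = 0 := this
    rw [sub_eq_zero] at h2
    exact h2.symm
  have happ : ((LinearMap.id : V →ₗ[ℝ] V) - (w : V →ₗ[ℝ] V)) x = x - w x := rfl
  rw [happ, inner_sub_left]
  have : ⟪w x, v⟫ = ⟪w x, w v⟫ := by rw [hvfix]
  rw [this, hw, sub_self]

lemma range_eq_ker_orth {w : V ≃ₗ[ℝ] V} (hw : IP w) :
    LinearMap.range (LinearMap.id - (w : V →ₗ[ℝ] V)) =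
      (LinearMap.ker (LinearMap.id - (w : V →ₗ[ℝ] V)))ᗮ := by
  set f : V →ₗ[ℝ] V := LinearMap.id - (w : V →ₗ[ℝ] V)
  have hle : LinearMap.range f ≤ (LinearMap.ker f)ᗮ := by
    intro u hu
    rw [Submodule.mem_orthogonal]
    intro v hv
    rw [real_inner_comm]
    exact range_orth_ker hw u hu v hv
  apply Submodule.eq_of_le_of_finrank_eq hle
  have hrn := LinearMap.finrank_range_add_finrank_ker f
  have horth := Submodule.finrank_add_finrank_orthogonal (LinearMap.ker f)
  omega

end FinDim
section Roots

attribute [local instance] Classical.propDecidable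

lemma apply_inv_apply (g : V ≃ₗ[ℝ] V) (x : V) : g (g⁻¹ x) = x := g.apply_symm_apply x

variable [FiniteDimensional ℝ V]

/-- The set of unit roots of reflections in `G`. -/
def RootsOf (G : Subgroup (V ≃ₗ[ℝ] V)) : Set V :=
  {a : V | ‖a‖ = 1 ∧ ∃ g ∈ G, ∀ x, g x = sR a x}

variable {G : Subgroup (V ≃ₗ[ℝ] V)} {x₀ : V}

lemma root_ne_zero {a : V} (ha : a ∈ RootsOf G) : a ≠ 0 := by
  intro h
  rw [h] at ha
  simpa using ha.1

lemma root_inner_self {a : V} (ha : a ∈ RootsOf G) : ⟪a, a⟫ = 1 := by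
  rw [real_inner_self_eq_norm_sq, ha.1, one_pow]

lemma rA_mem_of_root {a : V} (ha : a ∈ RootsOf G) : rA a ∈ G := by
  obtain ⟨-, g, hg, hga⟩ := ha
  have : rA a = g := by
    apply LinearEquiv.ext
    intro x
    rw [hga x]
    rfl
  rw [this]
  exact hg

lemma roots_neg {a : V} (ha : a ∈ RootsOf G) : -a ∈ RootsOf G := by
  obtain ⟨hn, g, hg, hga⟩ := ha
  exact ⟨by rw [norm_neg, hn], g, hg, fun x => by rw [hga x, sR_neg_root]⟩

lemma roots_G_stable {g : V ≃ₗ[ℝ] V} (hg : g ∈ G) (hgIP : IP g) {a : V}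
    (ha : a ∈ RootsOf G) : g a ∈ RootsOf G := by
  refine ⟨by rw [IP_norm hgIP, ha.1], g * rA a * g⁻¹, ?_, ?_⟩
  · exact mul_mem (mul_mem hg (rA_mem_of_root ha)) (inv_mem hg)
  · intro x
    have : (g * rA a * g⁻¹) x = g (sR a (g⁻¹ x)) := rfl
    rw [this, sR_conj hgIP, apply_inv_apply]

lemma rA_conj_eq {g : V ≃ₗ[ℝ] V} (hg : IP g) (a : V) : rA (g a) = g * rA a * g⁻¹ := by
  apply LinearEquiv.ext
  intro x
  have : (g * rA a * g⁻¹) x = g (sR a (g⁻¹ x)) := rfl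
  rw [this, sR_conj hg, apply_inv_apply]
  rfl

lemma rA_neg (a : V) : rA (-a) = rA a :=
  LinearEquiv.ext (fun x => sR_neg_root a x)

lemma roots_finite (hfin : Finite G) : (RootsOf G).Finite := by
  classical
  have hGfin : (G : Set (V ≃ₗ[ℝ] V)).Finite := Set.toFinite _
  have hcover : RootsOf G ⊆ ⋃ g ∈ (G : Set (V ≃ₗ[ℝ] V)), {a ∈ RootsOf G | rA a = g} := by
    intro a ha
    simp only [Set.mem_iUnion]
    exact ⟨rA a, rA_mem_of_root ha, ha, rfl⟩
  refine Set.Finite.subset (Set.Finite.biUnion hGfin (fun g _ => ?_)) hcover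
  rcases Set.eq_empty_or_nonempty {a ∈ RootsOf G | rA a = g} with he | ⟨a₀, ha₀, hg₀⟩
  · rw [he]; exact Set.finite_empty
  refine Set.Finite.subset ((Set.finite_singleton (-a₀)).insert a₀) ?_
  rintro a ⟨ha, hg⟩
  have heq : sR a₀ a = -a := by
    have : rA a₀ a = rA a a := by rw [hg₀, hg]
    simp only [rA_apply] at this
    rw [this, sR_self a (root_ne_zero ha)]
  have h2 : (2 : ℝ) • a = (2 * ⟪a, a₀⟫ / ⟪a₀, a₀⟫) • a₀ := by
    have : a - (2 * ⟪a, a₀⟫ / ⟪a₀, a₀⟫) • a₀ = -a := heq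
    have h3 := congrArg (· + ((2 * ⟪a, a₀⟫ / ⟪a₀, a₀⟫) • a₀ + a)) this
    rw [two_smul]
    rw [show a - (2 * ⟪a, a₀⟫ / ⟪a₀, a₀⟫) • a₀ + ((2 * ⟪a, a₀⟫ / ⟪a₀, a₀⟫) • a₀ + a)
        = a + a by abel] at h3
    rw [h3]
    abel
  set c := 2 * ⟪a, a₀⟫ / ⟪a₀, a₀⟫ with hc
  have ha2 : a = (c / 2) • a₀ := by
    have := congrArg (fun z => (1/2 : ℝ) • z) h2
    simp only [smul_smul] at this
    norm_num at this
    rw [this]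
    congr 1
    ring
  have hnorm : |c / 2| = 1 := by
    have : ‖a‖ = ‖(c/2) • a₀‖ := by rw [← ha2]
    rw [norm_smul, ha₀.1, ha.1, mul_one] at this
    rw [← Real.norm_eq_abs]
    exact this.symm
  rcases abs_eq (by norm_num : (0:ℝ) ≤ 1) |>.1 hnorm with h | h
  · left; rw [ha2, h, one_smul]
  · right; rw [ha2, h]; simp

/-- The positive roots with respect to a generic point `x₀`. -/
def Pos (G : Subgroup (V ≃ₗ[ℝ] V)) (x₀ : V) : Set V :=
  {a : V | a ∈ RootsOf G ∧ 0 < ⟪a, x₀⟫}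

lemma pos_or_neg (hx₀ : ∀ a ∈ RootsOf G, ⟪a, x₀⟫ ≠ 0) {a : V} (ha : a ∈ RootsOf G) :
    a ∈ Pos G x₀ ∨ -a ∈ Pos G x₀ := by
  rcases lt_or_gt_of_ne (hx₀ a ha) with h | h
  · right
    exact ⟨roots_neg ha, by rw [inner_neg_left]; linarith⟩
  · left
    exact ⟨ha, h⟩

lemma not_pos_and_neg {a : V} (h1 : a ∈ Pos G x₀) (h2 : -a ∈ Pos G x₀) : False := by
  have := h1.2
  have h3 := h2.2
  rw [inner_neg_left] at h3
  linarith

/-- The convex cone generated by a finite set. -/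
def cone (S : Finset V) : Set V :=
  {x : V | ∃ c : V → ℝ, (∀ b, 0 ≤ c b) ∧ x = ∑ b ∈ S, c b • b}

lemma mem_cone_self {S : Finset V} {a : V} (ha : a ∈ S) : a ∈ cone S := by
  classical
  refine ⟨fun b => if b = a then 1 else 0, fun b => by positivity, ?_⟩
  rw [show ∑ b ∈ S, (if b = a then (1:ℝ) else 0) • b
      = ∑ b ∈ S, (if b = a then b else 0) by
    apply Finset.sum_congr rfl
    intro b _
    split <;> simp]
  rw [Finset.sum_ite_eq' S a (fun b => b), if_pos ha]

lemma cone_subst {S : Finset V} {α : V} (hα : α ∈ cone (S.erase α)) :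
    ∀ x ∈ cone S, x ∈ cone (S.erase α) := by
  rintro x ⟨c, hc, rfl⟩
  obtain ⟨d, hd, hda⟩ := hα
  by_cases hαS : α ∈ S
  · refine ⟨fun b => c b + c α * d b, fun b => add_nonneg (hc b) (mul_nonneg (hc α) (hd b)), ?_⟩
    rw [← Finset.add_sum_erase S _ hαS]
    have h1 : ∑ b ∈ S.erase α, (c b + c α * d b) • b
        = ∑ b ∈ S.erase α, c b • b + c α • ∑ b ∈ S.erase α, d b • b := by
      rw [Finset.smul_sum, ← Finset.sum_add_distrib]
      apply Finset.sum_congr rfl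
      intro b _
      rw [add_smul, smul_smul]
    rw [h1, ← hda]
    abel
  · refine ⟨c, hc, ?_⟩
    rw [Finset.erase_eq_of_notMem hαS]

/-- Existence of a "simple system": a minimal subset of positive roots whose cone
contains all positive roots. -/
lemma exists_simple (hfin : Finite G) (hx₀ : ∀ a ∈ RootsOf G, ⟪a, x₀⟫ ≠ 0) :
    ∃ Δ : Finset V, (↑Δ ⊆ Pos G x₀) ∧ (∀ a ∈ Pos G x₀, a ∈ cone Δ) ∧
      (∀ α ∈ Δ, α ∉ cone (Δ.erase α)) := by
  classical
  have hPfin : (Pos G x₀).Finite :=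
    Set.Finite.subset (roots_finite hfin) (fun a ha => ha.1)
  set N := {n : ℕ | ∃ S : Finset V, (↑S ⊆ Pos G x₀) ∧ (∀ a ∈ Pos G x₀, a ∈ cone S) ∧
    S.card = n} with hN
  have hne : N.Nonempty := by
    refine ⟨hPfin.toFinset.card, hPfin.toFinset, ?_, ?_, rfl⟩
    · intro a ha
      rw [Finset.mem_coe, Set.Finite.mem_toFinset] at ha
      exact ha
    · intro a ha
      exact mem_cone_self (by rwa [Set.Finite.mem_toFinset])
  obtain ⟨Δ, hΔsub, hΔcover, hΔcard⟩ := Nat.sInf_mem hne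
  refine ⟨Δ, hΔsub, hΔcover, ?_⟩
  intro α hα hcone
  have hmem : (Δ.erase α).card ∈ N := by
    refine ⟨Δ.erase α, ?_, ?_, rfl⟩
    · intro a ha
      exact hΔsub (Finset.erase_subset _ _ ha)
    · intro a ha
      exact cone_subst hcone a (hΔcover a ha)
  have hlt : (Δ.erase α).card < Δ.card := Finset.card_erase_lt_of_mem hα
  have := Nat.sInf_le hmem
  omega

end Roots
section Simple

attribute [local instance] Classical.propDecidable

variable [FiniteDimensional ℝ V]
variable {G : Subgroup (V ≃ₗ[ℝ] V)} {x₀ : V} {Δ : Finset V}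

lemma inner_sum_smul (S : Finset V) (c : V → ℝ) (x : V) :
    ⟪∑ b ∈ S, c b • b, x⟫ = ∑ b ∈ S, c b * ⟪b, x⟫ := by
  rw [sum_inner]
  exact Finset.sum_congr rfl (fun b _ => real_inner_smul_left _ _ _)

lemma inner_sum_smul_right (S : Finset V) (c : V → ℝ) (x : V) :
    ⟪x, ∑ b ∈ S, c b • b⟫ = ∑ b ∈ S, c b * ⟪x, b⟫ := by
  rw [inner_sum]
  exact Finset.sum_congr rfl (fun b _ => real_inner_smul_right _ _ _)

lemma sum_ite_single {S : Finset V} {α : V} (hα : α ∈ S) (k : ℝ) :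
    ∑ b ∈ S, (if b = α then k else 0) • b = k • α := by
  rw [Finset.sum_congr rfl
    (fun b _ => show (if b = α then k else 0) • b = if b = α then k • b else 0 from
      by split <;> simp)]
  rw [Finset.sum_ite_eq' S α (fun b => k • b), if_pos hα]

lemma cone_of_rep {S : Finset V} {t : ℝ} (ht : 0 < t) {c : V → ℝ}
    (hc : ∀ b, 0 ≤ c b) {x : V} (hx : t • x = ∑ b ∈ S, c b • b) : x ∈ cone S := by
  refine ⟨fun b => t⁻¹ * c b, fun b => mul_nonneg (inv_nonneg.2 ht.le) (hc b), ?_⟩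
  have : x = t⁻¹ • (t • x) := by
    rw [smul_smul, inv_mul_cancel₀ ht.ne', one_smul]
  rw [this, hx, Finset.smul_sum]
  exact Finset.sum_congr rfl (fun b _ => by
    show t⁻¹ • c b • b = (t⁻¹ * c b) • b
    rw [smul_smul])

lemma sR_root_eq {α : V} (β : V) (hα : α ∈ RootsOf G) :
    sR α β = β - (2 * ⟪β, α⟫) • α := by
  rw [sR, root_inner_self hα, div_one]

/-- Simple roots are pairwise obtuse. -/
lemma obtuse (hΔsub : ↑Δ ⊆ Pos G x₀)
    (hext : ∀ α ∈ Δ, α ∉ cone (Δ.erase α))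
    (hcover : ∀ a ∈ Pos G x₀, a ∈ cone Δ)
    (hx₀ : ∀ a ∈ RootsOf G, ⟪a, x₀⟫ ≠ 0) :
    ∀ α ∈ Δ, ∀ β ∈ Δ, α ≠ β → ⟪α, β⟫ ≤ 0 := by
  intro α hα β hβ hαβ
  by_contra hcon
  push_neg at hcon
  have hαP : α ∈ Pos G x₀ := hΔsub hα
  have hβP : β ∈ Pos G x₀ := hΔsub hβ
  have hαR : α ∈ RootsOf G := hαP.1
  have hβR : β ∈ RootsOf G := hβP.1
  set k : ℝ := 2 * ⟪β, α⟫ with hk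
  have hkpos : 0 < k := by
    rw [hk, real_inner_comm]
    linarith
  have hγeq : sR α β = β - k • α := sR_root_eq β hαR
  have hγR : sR α β ∈ RootsOf G := by
    have := roots_G_stable (rA_mem_of_root hαR) (IP_rA α) hβR
    rwa [rA_apply] at this
  rcases pos_or_neg hx₀ hγR with hγP | hγN
  · obtain ⟨c, hc, hsum⟩ := hcover _ hγP
    set S' : V := ∑ b ∈ Δ.erase β, c b • b with hS'
    have e2 : β - k • α = c β • β + S' := by
      rw [← hγeq, hsum, ← Finset.add_sum_erase Δ _ hβ]
    have e4 : β - c β • β = k • α + S' := by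
      rw [sub_eq_iff_eq_add] at e2 ⊢
      exact e2.trans (by abel)
    have hS'x : 0 ≤ ⟪S', x₀⟫ := by
      rw [hS', inner_sum_smul]
      apply Finset.sum_nonneg
      intro b hb
      have hbP : b ∈ Pos G x₀ := hΔsub (Finset.erase_subset _ _ hb)
      exact mul_nonneg (hc b) hbP.2.le
    have hRHS : 0 < ⟪k • α + S', x₀⟫ := by
      rw [inner_add_left, real_inner_smul_left]
      have := hαP.2
      nlinarith
    have h1c : 0 < 1 - c β := by
      have h5 : (1 - c β) * ⟪β, x₀⟫ > 0 := by
        have hL : ⟪β - c β • β, x₀⟫ = (1 - c β) * ⟪β, x₀⟫ := by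
          rw [inner_sub_left, real_inner_smul_left]
          ring
        rw [← hL, e4]
        exact hRHS
      have := hβP.2
      nlinarith
    apply hext β hβ
    have hαe : α ∈ Δ.erase β := Finset.mem_erase.2 ⟨hαβ, hα⟩
    refine cone_of_rep h1c (c := fun b => c b + if b = α then k else 0)
      (fun b => add_nonneg (hc b) (by positivity)) ?_
    rw [Finset.sum_congr rfl (fun b _ => add_smul (c b) _ b), Finset.sum_add_distrib,
      sum_ite_single hαe k, sub_smul, one_smul, e4]
    abel
  · obtain ⟨c, hc, hsum⟩ := hcover _ hγN
    have hγeq' : k • α - β = ∑ b ∈ Δ, c b • b := by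
      rw [← hsum, hγeq]
      abel
    set S' : V := ∑ b ∈ Δ.erase α, c b • b with hS'
    have e2 : k • α - β = c α • α + S' := by
      rw [hγeq', ← Finset.add_sum_erase Δ _ hα]
    have e4 : k • α - c α • α = β + S' := by
      rw [sub_eq_iff_eq_add] at e2 ⊢
      exact e2.trans (by abel)
    have hS'x : 0 ≤ ⟪S', x₀⟫ := by
      rw [hS', inner_sum_smul]
      apply Finset.sum_nonneg
      intro b hb
      have hbP : b ∈ Pos G x₀ := hΔsub (Finset.erase_subset _ _ hb)
      exact mul_nonneg (hc b) hbP.2.le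
    have hRHS : 0 < ⟪β + S', x₀⟫ := by
      rw [inner_add_left]
      have := hβP.2
      linarith
    have hkc : 0 < k - c α := by
      have h5 : (k - c α) * ⟪α, x₀⟫ > 0 := by
        have hL : ⟪k • α - c α • α, x₀⟫ = (k - c α) * ⟪α, x₀⟫ := by
          rw [inner_sub_left, real_inner_smul_left, real_inner_smul_left]
          ring
        rw [← hL, e4]
        exact hRHS
      have := hαP.2
      nlinarith
    apply hext α hα
    have hβe : β ∈ Δ.erase α := Finset.mem_erase.2 ⟨Ne.symm hαβ, hβ⟩
    refine cone_of_rep hkc (c := fun b => c b + if b = β then 1 else 0)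
      (fun b => add_nonneg (hc b) (by positivity)) ?_
    rw [Finset.sum_congr rfl (fun b _ => add_smul (c b) _ b), Finset.sum_add_distrib,
      sum_ite_single hβe 1, one_smul, sub_smul, e4]
    abel

/-- Simple roots are linearly independent (coefficient form). -/
lemma indepΔ (hΔsub : ↑Δ ⊆ Pos G x₀)
    (hext : ∀ α ∈ Δ, α ∉ cone (Δ.erase α))
    (hcover : ∀ a ∈ Pos G x₀, a ∈ cone Δ)
    (hx₀ : ∀ a ∈ RootsOf G, ⟪a, x₀⟫ ≠ 0) :
    ∀ f : V → ℝ, ∑ b ∈ Δ, f b • b = 0 → ∀ b ∈ Δ, f b = 0 := by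
  intro f hf
  have hobt := obtuse hΔsub hext hcover hx₀
  set Pp := Δ.filter (fun b => 0 ≤ f b) with hPp
  set Nn := Δ.filter (fun b => ¬ (0 ≤ f b)) with hNn
  set v : V := ∑ b ∈ Pp, f b • b with hv
  have hsplit : ∑ b ∈ Pp, f b • b + ∑ b ∈ Nn, f b • b = 0 := by
    rw [Finset.sum_filter_add_sum_filter_not Δ _ (fun b => f b • b)]
    exact hf
  have hveq : v = ∑ b ∈ Nn, (-f b) • b := by
    have h1 : ∑ b ∈ Nn, (-f b) • b = -∑ b ∈ Nn, f b • b := by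
      rw [← Finset.sum_neg_distrib]
      exact Finset.sum_congr rfl (fun b _ => by rw [neg_smul])
    rw [hv, h1, eq_neg_iff_add_eq_zero]
    exact hsplit
  have hvv : ⟪v, v⟫ ≤ 0 := by
    nth_rewrite 2 [hveq]
    rw [hv, sum_inner]
    apply Finset.sum_nonpos
    intro b hb
    rw [real_inner_smul_left, inner_sum_smul_right]
    have hbΔ : b ∈ Δ := (Finset.mem_filter.1 hb).1
    have hbf : 0 ≤ f b := (Finset.mem_filter.1 hb).2
    apply mul_nonpos_of_nonneg_of_nonpos hbf
    apply Finset.sum_nonpos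
    intro b' hb'
    have hb'Δ : b' ∈ Δ := (Finset.mem_filter.1 hb').1
    have hb'f : ¬ (0 ≤ f b') := (Finset.mem_filter.1 hb').2
    have hne : b ≠ b' := fun h => hb'f (h ▸ hbf)
    apply mul_nonpos_of_nonneg_of_nonpos (by linarith [not_le.mp hb'f])
    exact hobt b hbΔ b' hb'Δ hne
  have hv0 : v = 0 := by
    have h1 : ⟪v, v⟫ = 0 := le_antisymm hvv real_inner_self_nonneg
    exact (inner_self_eq_zero (𝕜 := ℝ)).1 h1
  have hPpz : ∀ b ∈ Pp, f b * ⟪b, x₀⟫ = 0 := by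
    have h1 : ∑ b ∈ Pp, f b * ⟪b, x₀⟫ = 0 := by
      rw [← inner_sum_smul, ← hv, hv0, inner_zero_left]
    intro b hb
    refine (Finset.sum_eq_zero_iff_of_nonneg ?_).1 h1 b hb
    intro b' hb'
    have hbP : b' ∈ Pos G x₀ := hΔsub ((Finset.mem_filter.1 hb').1)
    exact mul_nonneg ((Finset.mem_filter.1 hb').2) hbP.2.le
  have hNnz : ∀ b ∈ Nn, (-f b) * ⟪b, x₀⟫ = 0 := by
    have h1 : ∑ b ∈ Nn, (-f b) * ⟪b, x₀⟫ = 0 := by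
      rw [← inner_sum_smul, ← hveq, hv0, inner_zero_left]
    intro b hb
    refine (Finset.sum_eq_zero_iff_of_nonneg ?_).1 h1 b hb
    intro b' hb'
    have hbP : b' ∈ Pos G x₀ := hΔsub ((Finset.mem_filter.1 hb').1)
    exact mul_nonneg (by linarith [not_le.mp ((Finset.mem_filter.1 hb').2)]) hbP.2.le
  intro b hbΔ
  have hbx : 0 < ⟪b, x₀⟫ := (hΔsub hbΔ).2
  by_cases hbf : 0 ≤ f b
  · have := hPpz b (Finset.mem_filter.2 ⟨hbΔ, hbf⟩)
    rcases mul_eq_zero.1 this with h | h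
    · exact h
    · linarith
  · have := hNnz b (Finset.mem_filter.2 ⟨hbΔ, hbf⟩)
    rcases mul_eq_zero.1 this with h | h
    · linarith
    · linarith

/-- Key lemma: a simple reflection maps other positive roots to positive roots. -/
lemma simple_perm (hΔsub : ↑Δ ⊆ Pos G x₀)
    (hext : ∀ α ∈ Δ, α ∉ cone (Δ.erase α))
    (hcover : ∀ a ∈ Pos G x₀, a ∈ cone Δ)
    (hx₀ : ∀ a ∈ RootsOf G, ⟪a, x₀⟫ ≠ 0) :
    ∀ α ∈ Δ, ∀ β ∈ Pos G x₀, β ≠ α → sR α β ∈ Pos G x₀ := by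
  intro α hα β hβP hne
  have hαP : α ∈ Pos G x₀ := hΔsub hα
  have hαR : α ∈ RootsOf G := hαP.1
  have hβR : β ∈ RootsOf G := hβP.1
  set k : ℝ := 2 * ⟪β, α⟫ with hk
  have hγeq : sR α β = β - k • α := sR_root_eq β hαR
  have hγR : sR α β ∈ RootsOf G := by
    have := roots_G_stable (rA_mem_of_root hαR) (IP_rA α) hβR
    rwa [rA_apply] at this
  rcases pos_or_neg hx₀ hγR with hγP | hγN
  · exact hγP
  exfalso
  obtain ⟨c, hc, hsum⟩ := hcover _ hγN
  obtain ⟨d, hd, hsumd⟩ := hcover _ hβP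
  have hγeq' : k • α - β = ∑ b ∈ Δ, c b • b := by
    rw [← hsum, hγeq]
    abel
  have hcomb : ∑ b ∈ Δ, (c b + d b) • b = k • α := by
    rw [Finset.sum_congr rfl (fun b _ => add_smul (c b) (d b) b), Finset.sum_add_distrib,
      ← hγeq', ← hsumd]
    abel
  have hf0 : ∑ b ∈ Δ, (fun b => c b + d b - if b = α then k else 0) b • b = 0 := by
    rw [Finset.sum_congr rfl
      (fun b _ => sub_smul (c b + d b) (if b = α then k else 0) b),
      Finset.sum_sub_distrib, hcomb, sum_ite_single hα k, sub_self]
  have hall := indepΔ hΔsub hext hcover hx₀ _ hf0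
  have hdz : ∀ b ∈ Δ, b ≠ α → d b = 0 := by
    intro b hb hbne
    have := hall b hb
    simp only [if_neg hbne] at this
    have hcb := hc b
    have hdb := hd b
    linarith
  have hβα : β = d α • α := by
    rw [hsumd]
    apply Finset.sum_eq_single_of_mem α hα
    intro b hb hbne
    rw [hdz b hb hbne, zero_smul]
  have hnormβ : ‖β‖ = 1 := hβR.1
  have hnormα : ‖α‖ = 1 := hαR.1
  have : |d α| = 1 := by
    rw [hβα, norm_smul, hnormα, mul_one, Real.norm_eq_abs] at hnormβ
    exact hnormβ
  have hd1 : d α = 1 := by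
    rcases abs_eq (by norm_num : (0:ℝ) ≤ 1) |>.1 this with h | h
    · exact h
    · linarith [hd α]
  exact hne (by rw [hβα, hd1, one_smul])

end Simple
section Words

attribute [local instance] Classical.propDecidable

variable [FiniteDimensional ℝ V]
variable {G : Subgroup (V ≃ₗ[ℝ] V)} {x₀ : V} {Δ : Finset V}

/-- The product of reflections along a list of roots, as a linear automorphism. -/
noncomputable def wlist (L : List V) : V ≃ₗ[ℝ] V := (L.map rA).prod

@[simp] lemma wlist_nil : wlist ([] : List V) = 1 := rfl

@[simp] lemma wlist_cons (δ : V) (L : List V) : wlist (δ :: L) = rA δ * wlist L := by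
  rw [wlist, List.map_cons, List.prod_cons]
  rfl

lemma wlist_append (L M : List V) : wlist (L ++ M) = wlist L * wlist M := by
  rw [wlist, List.map_append, List.prod_append]
  rfl

lemma wlist_mem (L : List V) (h : ∀ δ ∈ L, δ ∈ RootsOf G) : wlist L ∈ G := by
  induction L with
  | nil => exact one_mem G
  | cons δ M ih =>
    rw [wlist_cons]
    exact mul_mem (rA_mem_of_root (h δ (List.mem_cons_self)))
      (ih (fun b hb => h b (List.mem_cons_of_mem _ hb)))

lemma wlist_IP (L : List V) : IP (wlist L) := by
  induction L with
  | nil => exact IP_one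
  | cons δ M ih =>
    rw [wlist_cons]
    exact IP_mul (IP_rA δ) ih

lemma rA_inv (a : V) : (rA a)⁻¹ = rA a :=
  inv_eq_of_mul_eq_one_right (rA_mul_self a)

@[simp] lemma wlist_singleton (x : V) : wlist [x] = rA x := by
  rw [wlist_cons, wlist_nil, mul_one]

lemma wlist_inv (L : List V) : (wlist L)⁻¹ = wlist L.reverse := by
  induction L with
  | nil => simp
  | cons δ M ih =>
    rw [wlist_cons, List.reverse_cons, wlist_append, mul_inv_rev, ih, rA_inv,
      wlist_singleton]

lemma wlist_mul_getLast {M : List V} (hM : M ≠ []) :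
    wlist M * rA (M.getLast hM) = wlist M.dropLast := by
  have h1 : wlist M = wlist M.dropLast * rA (M.getLast hM) := by
    conv_lhs => rw [(List.dropLast_append_getLast hM).symm, wlist_append, wlist_singleton]
  rw [h1, mul_assoc, rA_mul_self, mul_one]

/-- Deletion: a word in simple reflections either sends the last root to a negative
root, or can be shortened by two. -/
lemma deletion (hΔsub : ↑Δ ⊆ Pos G x₀)
    (hext : ∀ α ∈ Δ, α ∉ cone (Δ.erase α))
    (hcover : ∀ a ∈ Pos G x₀, a ∈ cone Δ)
    (hx₀ : ∀ a ∈ RootsOf G, ⟪a, x₀⟫ ≠ 0) :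
    ∀ (L : List V) (hne : L ≠ []), (∀ δ ∈ L, δ ∈ Δ) →
      (-(wlist L (L.getLast hne)) ∈ Pos G x₀ ∨
       ∃ L' : List V, (∀ δ ∈ L', δ ∈ Δ) ∧ L'.length + 2 = L.length ∧ wlist L' = wlist L) := by
  intro L
  induction L with
  | nil => intro hne; exact absurd rfl hne
  | cons δ M ih =>
    intro hne hsub
    have hδΔ : δ ∈ Δ := hsub δ (List.mem_cons_self)
    have hδP : δ ∈ Pos G x₀ := hΔsub hδΔ
    have hδR : δ ∈ RootsOf G := hδP.1
    rcases eq_or_ne M [] with rfl | hMne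
    · left
      have hlast : (δ :: ([] : List V)).getLast hne = δ := rfl
      rw [hlast]
      have : wlist [δ] δ = sR δ δ := by
        rw [show wlist [δ] = rA δ from by rw [wlist, List.map_singleton, List.prod_singleton]]
        rfl
      rw [this, sR_self δ (root_ne_zero hδR), neg_neg]
      exact hδP
    · have hsubM : ∀ b ∈ M, b ∈ Δ := fun b hb => hsub b (List.mem_cons_of_mem _ hb)
      have hlast : (δ :: M).getLast hne = M.getLast hMne := List.getLast_cons hMne
      have hlastΔ : M.getLast hMne ∈ Δ := hsubM _ (List.getLast_mem hMne)
      rcases ih hMne hsubM with hneg | ⟨L'', hL''sub, hL''len, hL''eq⟩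
      · set β : V := wlist M (M.getLast hMne) with hβ
        have happ : wlist (δ :: M) ((δ :: M).getLast hne) = sR δ β := by
          rw [hlast, wlist_cons]
          rfl
        by_cases hcase : -β = δ
        · -- cancellation
          right
          have hu : wlist M (M.getLast hMne) = -δ := by
            rw [← hβ]
            rw [← hcase, neg_neg]
          have hrAδ : rA δ = wlist M * rA (M.getLast hMne) * (wlist M)⁻¹ := by
            rw [← rA_conj_eq (wlist_IP M) (M.getLast hMne), hu, rA_neg]
          refine ⟨M.dropLast, ?_, ?_, ?_⟩
          · intro b hb
            exact hsubM b (List.dropLast_subset M hb)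
          · have h1 : M.length ≥ 1 := List.length_pos_of_ne_nil hMne
            have h2 : M.dropLast.length = M.length - 1 := List.length_dropLast
            simp only [List.length_cons]
            omega
          · rw [wlist_cons, hrAδ, inv_mul_cancel_right, wlist_mul_getLast hMne]
        · left
          rw [happ]
          have hβP : -β ∈ Pos G x₀ := hneg
          have := simple_perm hΔsub hext hcover hx₀ δ hδΔ (-β) hβP hcase
          have hlin : sR δ (-β) = -(sR δ β) := by
            have : rA δ (-β) = -(rA δ β) := map_neg _ β
            simpa using this
          rwa [hlin] at this
      · right
        refine ⟨δ :: L'', ?_, ?_, ?_⟩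
        · intro b hb
          rcases List.mem_cons.1 hb with rfl | hb
          · exact hδΔ
          · exact hL''sub b hb
        · simp only [List.length_cons]
          omega
        · rw [wlist_cons, wlist_cons, hL''eq]

/-- Any word in simple reflections fixing `x₀` is trivial. -/
lemma word_fix_eq_one (hΔsub : ↑Δ ⊆ Pos G x₀)
    (hext : ∀ α ∈ Δ, α ∉ cone (Δ.erase α))
    (hcover : ∀ a ∈ Pos G x₀, a ∈ cone Δ)
    (hx₀ : ∀ a ∈ RootsOf G, ⟪a, x₀⟫ ≠ 0) :
    ∀ (k : ℕ) (L : List V), L.length = k → (∀ δ ∈ L, δ ∈ Δ) →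
      wlist L x₀ = x₀ → wlist L = 1 := by
  intro k
  induction k using Nat.strong_induction_on with
  | _ k ih =>
    intro L hlen hsub hfix
    rcases eq_or_ne L [] with rfl | hne
    · rfl
    have hwG : wlist L ∈ G := wlist_mem L (fun b hb => (hΔsub (hsub b hb)).1)
    have hwIP : IP (wlist L) := wlist_IP L
    rcases deletion hΔsub hext hcover hx₀ L hne hsub with hneg | ⟨L', hL'sub, hL'len, hL'eq⟩
    · exfalso
      have hlastΔ : L.getLast hne ∈ Δ := hsub _ (List.getLast_mem hne)
      have hlastP : L.getLast hne ∈ Pos G x₀ := hΔsub hlastΔ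
      have himgR : wlist L (L.getLast hne) ∈ RootsOf G :=
        roots_G_stable hwG hwIP hlastP.1
      have himgP : wlist L (L.getLast hne) ∈ Pos G x₀ := by
        refine ⟨himgR, ?_⟩
        have : ⟪wlist L (L.getLast hne), x₀⟫
            = ⟪wlist L (L.getLast hne), wlist L x₀⟫ := by rw [hfix]
        rw [this, hwIP]
        exact hlastP.2
      exact not_pos_and_neg himgP hneg
    · have hfix' : wlist L' x₀ = x₀ := by
        rw [hL'eq]
        exact hfix
      have := ih L'.length (by omega) L' rfl hL'sub hfix'
      rw [← hL'eq, this]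

end Words
section Generation

attribute [local instance] Classical.propDecidable

variable [FiniteDimensional ℝ V]
variable {G : Subgroup (V ≃ₗ[ℝ] V)} {x₀ : V} {Δ : Finset V}

/-- Every positive root is in the orbit of a simple root under words in simple reflections. -/
lemma reach (hfin : Finite G) (hΔsub : ↑Δ ⊆ Pos G x₀)
    (hext : ∀ α ∈ Δ, α ∉ cone (Δ.erase α))
    (hcover : ∀ a ∈ Pos G x₀, a ∈ cone Δ)
    (hx₀ : ∀ a ∈ RootsOf G, ⟪a, x₀⟫ ≠ 0) :
    ∀ a ∈ Pos G x₀, ∃ (L : List V) (δ₀ : V),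
      (∀ δ ∈ L, δ ∈ Δ) ∧ δ₀ ∈ Δ ∧ wlist L δ₀ = a := by
  set S := {a ∈ Pos G x₀ | ¬ ∃ (L : List V) (δ₀ : V),
    (∀ δ ∈ L, δ ∈ Δ) ∧ δ₀ ∈ Δ ∧ wlist L δ₀ = a} with hS
  suffices hempty : S = ∅ by
    intro a haP
    by_contra hcon
    have : a ∈ S := ⟨haP, hcon⟩
    rw [hempty] at this
    exact this
  by_contra hne
  have hSfin : S.Finite :=
    Set.Finite.subset (roots_finite hfin) (fun a ha => ha.1.1)
  obtain ⟨a, haS, hamin⟩ := Set.exists_min_image S (fun a => ⟪a, x₀⟫) hSfin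
    (Set.nonempty_iff_ne_empty.2 hne)
  have haP : a ∈ Pos G x₀ := haS.1
  have haR : a ∈ RootsOf G := haP.1
  obtain ⟨c, hc, hsum⟩ := hcover a haP
  have hone : ∑ b ∈ Δ, c b * ⟪b, a⟫ = 1 := by
    rw [← inner_sum_smul, ← hsum, root_inner_self haR]
  have hδ₀ : ∃ δ₀ ∈ Δ, 0 < c δ₀ * ⟪δ₀, a⟫ := by
    by_contra hcon
    push_neg at hcon
    have : ∑ b ∈ Δ, c b * ⟪b, a⟫ ≤ 0 := Finset.sum_nonpos hcon
    linarith
  obtain ⟨δ₀, hδ₀Δ, hδ₀pos⟩ := hδ₀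
  have hδa : 0 < ⟪δ₀, a⟫ := by
    rcases le_or_gt (⟪δ₀, a⟫) 0 with h | h
    · nlinarith [hc δ₀]
    · exact h
  by_cases haδ : a = δ₀
  · exact haS.2 ⟨[], δ₀, fun δ h => absurd h List.not_mem_nil, hδ₀Δ, by
      rw [wlist_nil]
      exact haδ.symm⟩
  · have ha'P : sR δ₀ a ∈ Pos G x₀ :=
      simple_perm hΔsub hext hcover hx₀ δ₀ hδ₀Δ a haP haδ
    have hδ₀P : δ₀ ∈ Pos G x₀ := hΔsub hδ₀Δ
    have hlt : ⟪sR δ₀ a, x₀⟫ < ⟪a, x₀⟫ := by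
      rw [sR_root_eq a hδ₀P.1, inner_sub_left, real_inner_smul_left]
      have h1 : ⟪a, δ₀⟫ = ⟪δ₀, a⟫ := real_inner_comm _ _
      have h2 := hδ₀P.2
      nlinarith
    have ha'nS : sR δ₀ a ∉ S := by
      intro hin
      have := hamin _ hin
      linarith
    have ha'wit : ∃ (L : List V) (δ' : V),
        (∀ δ ∈ L, δ ∈ Δ) ∧ δ' ∈ Δ ∧ wlist L δ' = sR δ₀ a := by
      by_contra hcon
      exact ha'nS ⟨ha'P, hcon⟩
    obtain ⟨L, δ', hLsub, hδ'Δ, hLδ'⟩ := ha'wit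
    refine haS.2 ⟨δ₀ :: L, δ', ?_, hδ'Δ, ?_⟩
    · intro δ hδ
      rcases List.mem_cons.1 hδ with rfl | hδ
      · exact hδ₀Δ
      · exact hLsub δ hδ
    · rw [wlist_cons]
      have : (rA δ₀ * wlist L) δ' = rA δ₀ (wlist L δ') := rfl
      rw [this, hLδ', rA_apply, sR_sR]

/-- Every reflection in `G` is a word in simple reflections. -/
lemma refl_word (hfin : Finite G) (hΔsub : ↑Δ ⊆ Pos G x₀)
    (hext : ∀ α ∈ Δ, α ∉ cone (Δ.erase α))
    (hcover : ∀ a ∈ Pos G x₀, a ∈ cone Δ)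
    (hx₀ : ∀ a ∈ RootsOf G, ⟪a, x₀⟫ ≠ 0)
    {t : V ≃ₗ[ℝ] V} (htG : t ∈ G) (htR : IsReflAuto t) :
    ∃ L : List V, (∀ δ ∈ L, δ ∈ Δ) ∧ wlist L = t := by
  obtain ⟨b, hb0, hbt⟩ := htR
  have hnb : ‖b‖ ≠ 0 := norm_ne_zero_iff.2 hb0
  set a : V := ‖b‖⁻¹ • b with ha
  have hna : ‖a‖ = 1 := by
    rw [ha, norm_smul, norm_inv, norm_norm, inv_mul_cancel₀ hnb]
  have hsRa : ∀ x, sR a x = sR b x := sR_smul_root (inv_ne_zero hnb)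
  have haR : a ∈ RootsOf G := ⟨hna, t, htG, fun x => (hbt x).trans (hsRa x).symm⟩
  have hexists : ∃ a₁ ∈ Pos G x₀, rA a₁ = t := by
    rcases pos_or_neg hx₀ haR with h | h
    · refine ⟨a, h, ?_⟩
      apply LinearEquiv.ext
      intro x
      rw [rA_apply, hsRa, ← hbt]
    · refine ⟨-a, h, ?_⟩
      apply LinearEquiv.ext
      intro x
      rw [rA_neg, rA_apply, hsRa, ← hbt]
  obtain ⟨a₁, ha₁P, ha₁t⟩ := hexists
  obtain ⟨L, δ₀, hLsub, hδ₀Δ, hLδ₀⟩ := reach hfin hΔsub hext hcover hx₀ a₁ ha₁P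
  refine ⟨L ++ δ₀ :: L.reverse, ?_, ?_⟩
  · intro δ hδ
    rcases List.mem_append.1 hδ with h | h
    · exact hLsub δ h
    · rcases List.mem_cons.1 h with rfl | h
      · exact hδ₀Δ
      · exact hLsub δ (List.mem_reverse.1 h)
  · rw [wlist_append, wlist_cons, ← wlist_inv, ← ha₁t, ← hLδ₀,
      rA_conj_eq (wlist_IP L) δ₀]
    group

/-- Every element of `G` is a word in simple reflections. -/
lemma mem_word (hfin : Finite G)
    (hgen : Subgroup.closure {t : V ≃ₗ[ℝ] V | t ∈ G ∧ IsReflAuto t} = G)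
    (hΔsub : ↑Δ ⊆ Pos G x₀)
    (hext : ∀ α ∈ Δ, α ∉ cone (Δ.erase α))
    (hcover : ∀ a ∈ Pos G x₀, a ∈ cone Δ)
    (hx₀ : ∀ a ∈ RootsOf G, ⟪a, x₀⟫ ≠ 0)
    {w : V ≃ₗ[ℝ] V} (hw : w ∈ G) :
    ∃ L : List V, (∀ δ ∈ L, δ ∈ Δ) ∧ wlist L = w := by
  rw [← hgen] at hw
  induction hw using Subgroup.closure_induction with
  | mem t ht => exact refl_word hfin hΔsub hext hcover hx₀ ht.1 ht.2
  | one => exact ⟨[], fun δ h => absurd h List.not_mem_nil, rfl⟩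
  | mul x y hx hy ihx ihy =>
    obtain ⟨L1, h1, e1⟩ := ihx
    obtain ⟨L2, h2, e2⟩ := ihy
    refine ⟨L1 ++ L2, ?_, by rw [wlist_append, e1, e2]⟩
    intro δ hδ
    rcases List.mem_append.1 hδ with h | h
    · exact h1 δ h
    · exact h2 δ h
  | inv x hx ihx =>
    obtain ⟨L, h1, e1⟩ := ihx
    exact ⟨L.reverse, fun δ hδ => h1 δ (List.mem_reverse.1 hδ),
      by rw [← wlist_inv, e1]⟩

/-- Generic point of a subspace avoiding finitely many hyperplanes. -/
lemma generic_point (F : Submodule ℝ V) (s : Finset V)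
    (h : ∀ a ∈ s, ∃ f ∈ F, ⟪a, f⟫ ≠ 0) :
    ∃ x ∈ F, ∀ a ∈ s, ⟪a, x⟫ ≠ 0 := by
  classical
  induction s using Finset.induction_on with
  | empty => exact ⟨0, zero_mem F, fun a ha => absurd ha (Finset.notMem_empty a)⟩
  | @insert a s hns ih =>
    obtain ⟨x, hxF, hx⟩ := ih (fun b hb => h b (Finset.mem_insert_of_mem hb))
    obtain ⟨f, hfF, hf⟩ := h a (Finset.mem_insert_self a s)
    obtain ⟨t, hts⟩ := Infinite.exists_notMem_finset
      (insert (0:ℝ) ((insert a s).image (fun b => -⟪b, x⟫ / ⟪b, f⟫)))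
    have ht0 : t ≠ 0 := fun hc => hts (by rw [hc]; exact Finset.mem_insert_self _ _)
    refine ⟨x + t • f, add_mem hxF (smul_mem F t hfF), ?_⟩
    intro b hb
    have hbx' : ⟪b, x + t • f⟫ = ⟪b, x⟫ + t * ⟪b, f⟫ := by
      rw [inner_add_right, real_inner_smul_right]
    rw [hbx']
    by_cases hbf : ⟪b, f⟫ = 0
    · have hbs : b ∈ s := by
        rcases Finset.mem_insert.1 hb with rfl | hbs
        · exact absurd hbf hf
        · exact hbs
      rw [hbf, mul_zero, add_zero]
      exact hx b hbs
    · intro hc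
      apply hts
      apply Finset.mem_insert_of_mem
      refine Finset.mem_image.2 ⟨b, hb, ?_⟩
      field_simp
      linarith

/-- Steinberg-type existence: for `w ∈ G`, `w ≠ 1`, there is a root of `G`
inside `Im (1 - w)`. -/
lemma exists_root_in_range (hfin : Finite G)
    (hgen : Subgroup.closure {t : V ≃ₗ[ℝ] V | t ∈ G ∧ IsReflAuto t} = G)
    {w : V ≃ₗ[ℝ] V} (hwG : w ∈ G) (hw1 : w ≠ 1) :
    ∃ a, a ∈ RootsOf G ∧
      a ∈ LinearMap.range ((LinearMap.id : V →ₗ[ℝ] V) - (w : V →ₗ[ℝ] V)) := by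
  by_contra hcon
  push_neg at hcon
  have hwIP : IP w := IP_of_mem hgen hwG
  set F := LinearMap.ker ((LinearMap.id : V →ₗ[ℝ] V) - (w : V →ₗ[ℝ] V)) with hF
  have hrange := range_eq_ker_orth hwIP
  have hgen_pt : ∀ a ∈ (roots_finite (G := G) hfin).toFinset, ∃ f ∈ F, ⟪a, f⟫ ≠ 0 := by
    intro a ha
    rw [Set.Finite.mem_toFinset] at ha
    have hnot := hcon a ha
    rw [hrange] at hnot
    by_contra hc
    push_neg at hc
    apply hnot
    rw [Submodule.mem_orthogonal]
    intro u hu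
    rw [real_inner_comm]
    exact hc u hu
  obtain ⟨x₀, hx₀F, hx₀⟩ := generic_point F _ hgen_pt
  have hx₀' : ∀ a ∈ RootsOf G, ⟪a, x₀⟫ ≠ 0 := by
    intro a ha
    exact hx₀ a ((roots_finite hfin).mem_toFinset.2 ha)
  obtain ⟨Δ, hΔsub, hcover, hext⟩ := exists_simple hfin hx₀'
  obtain ⟨L, hLsub, hLw⟩ := mem_word hfin hgen hΔsub hext hcover hx₀' hwG
  have hwx₀ : w x₀ = x₀ := by
    have := LinearMap.mem_ker.1 hx₀F
    have h2 : x₀ - w x₀ = 0 := this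
    rw [sub_eq_zero] at h2
    exact h2.symm
  have hfix : wlist L x₀ = x₀ := by rw [hLw]; exact hwx₀
  have := word_fix_eq_one hΔsub hext hcover hx₀' L.length L rfl hLsub hfix
  exact hw1 (by rw [← hLw, this])

end Generation
section Main

variable [FiniteDimensional ℝ V]
variable {G : Subgroup (V ≃ₗ[ℝ] V)}

lemma oneSub_apply (w : V ≃ₗ[ℝ] V) (x : V) :
    ((LinearMap.id : V →ₗ[ℝ] V) - (w : V →ₗ[ℝ] V)) x = x - w x := rfl

/-- Multiplying by a reflection whose root lies in `Im (1 - w)` decreases the rank. -/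
lemma rank_decrease {w : V ≃ₗ[ℝ] V} (hwIP : IP w) {a : V} (ha0 : a ≠ 0)
    (haR : a ∈ LinearMap.range ((LinearMap.id : V →ₗ[ℝ] V) - (w : V →ₗ[ℝ] V))) :
    finrank ℝ (LinearMap.range ((LinearMap.id : V →ₗ[ℝ] V) - ((rA a * w : V ≃ₗ[ℝ] V) : V →ₗ[ℝ] V)))
      < finrank ℝ (LinearMap.range ((LinearMap.id : V →ₗ[ℝ] V) - (w : V →ₗ[ℝ] V))) := by
  set f : V →ₗ[ℝ] V := LinearMap.id - (w : V →ₗ[ℝ] V) with hf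
  set w' : V ≃ₗ[ℝ] V := rA a * w with hw'
  set f' : V →ₗ[ℝ] V := LinearMap.id - (w' : V →ₗ[ℝ] V) with hf'
  have hw'app : ∀ x, w' x = sR a (w x) := fun x => rfl
  have hker_le : LinearMap.ker f ≤ LinearMap.ker f' := by
    intro x hx
    have hfix : w x = x := by
      have h2 : x - w x = 0 := LinearMap.mem_ker.1 hx
      rw [sub_eq_zero] at h2
      exact h2.symm
    have hax : ⟪a, x⟫ = 0 := range_orth_ker hwIP a haR x hx
    rw [LinearMap.mem_ker]
    show x - w' x = 0
    rw [hw'app, hfix, sR_of_inner_eq_zero (by rw [real_inner_comm]; exact hax), sub_self]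
  obtain ⟨y₀, hy₀⟩ := haR
  set y : V := y₀ - (orthogonalProjection (LinearMap.ker f) y₀ : V) with hy
  have hyF : f y = a := by
    have hproj : f ((orthogonalProjection (LinearMap.ker f) y₀ : V)) = 0 :=
      LinearMap.mem_ker.1 (orthogonalProjection (LinearMap.ker f) y₀).2
    rw [hy, map_sub, hy₀, hproj, sub_zero]
  have hyorth : y ∈ (LinearMap.ker f)ᗮ := by exact sub_starProjection_mem_orthogonal (K := LinearMap.ker f) y₀
  have hy0 : y ≠ 0 := by
    intro hc
    rw [hc, map_zero] at hyF
    exact ha0 hyF.symm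
  have hywy : y - w y = a := hyF
  have hwy : w y = y - a := by rw [← hywy]; abel
  have hnorm : ‖w y‖ = ‖y‖ := IP_norm hwIP y
  have h2ya : 2 * ⟪y, a⟫ = ⟪a, a⟫ := by
    have e1 : ⟪a, a⟫ = ‖y - w y‖ ^ 2 := by
      rw [hywy, real_inner_self_eq_norm_sq]
    rw [e1, norm_sub_sq_real, hnorm]
    have e2 : ⟪y, a⟫ = ⟪y, y⟫ - ⟪y, w y⟫ := by
      rw [← inner_sub_right, hywy]
    rw [e2, real_inner_self_eq_norm_sq]
    ring
  have hcoef : 2 * ⟪y, a⟫ / ⟪a, a⟫ = 1 := by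
    have haa : ⟪a, a⟫ ≠ 0 := (inner_self_ne_zero (𝕜 := ℝ)).2 ha0
    rw [h2ya, div_self haa]
  have hsRy : sR a y = y - a := by
    rw [sR, hcoef, one_smul]
  have hw'y : w' y = y := by
    rw [hw'app, hwy]
    have : sR a (y - a) = sR a y - sR a a := by
      have := map_sub (rA a) y a
      simpa using this
    rw [this, hsRy, sR_self a ha0]
    abel
  have hyker' : y ∈ LinearMap.ker f' := by
    rw [LinearMap.mem_ker]
    show y - w' y = 0
    rw [hw'y, sub_self]
  have hynker : y ∉ LinearMap.ker f := by
    intro hc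
    have := hyorth y hc
    rw [real_inner_comm] at this
    exact hy0 ((inner_self_eq_zero (𝕜 := ℝ)).1 this)
  have hlt : LinearMap.ker f < LinearMap.ker f' :=
    lt_of_le_of_ne hker_le (fun he => hynker (he.symm ▸ hyker'))
  have hkerlt := Submodule.finrank_lt_finrank_of_lt hlt
  have hrn1 := LinearMap.finrank_range_add_finrank_ker f
  have hrn2 := LinearMap.finrank_range_add_finrank_ker f'
  omega

/-- Subadditivity: multiplying by a reflection changes rank by at most one. -/
lemma rank_sub_le {w : V ≃ₗ[ℝ] V} {a : V} (ha0 : a ≠ 0) :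
    finrank ℝ (LinearMap.range ((LinearMap.id : V →ₗ[ℝ] V) - (w : V →ₗ[ℝ] V)))
      ≤ finrank ℝ (LinearMap.range ((LinearMap.id : V →ₗ[ℝ] V)
          - ((rA a * w : V ≃ₗ[ℝ] V) : V →ₗ[ℝ] V))) + 1 := by
  set w' : V ≃ₗ[ℝ] V := rA a * w with hw'
  have hle : LinearMap.range ((LinearMap.id : V →ₗ[ℝ] V) - (w : V →ₗ[ℝ] V))
      ≤ LinearMap.range ((LinearMap.id : V →ₗ[ℝ] V) - (w' : V →ₗ[ℝ] V)) ⊔ (ℝ ∙ a) := by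
    rintro u ⟨x, rfl⟩
    have he : ((LinearMap.id : V →ₗ[ℝ] V) - (w : V →ₗ[ℝ] V)) x
        = (x - w' x) + (w' x - w x) := by
      rw [oneSub_apply]
      abel
    rw [he]
    apply Submodule.add_mem_sup
    · exact ⟨x, rfl⟩
    · have hw'x : w' x = sR a (w x) := rfl
      have : w' x - w x = -(w x - sR a (w x)) := by rw [hw'x]; abel
      rw [this]
      exact neg_mem (sub_sR_mem_span a (w x))
  calc finrank ℝ (LinearMap.range ((LinearMap.id : V →ₗ[ℝ] V) - (w : V →ₗ[ℝ] V)))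
      ≤ finrank ℝ ((LinearMap.range ((LinearMap.id : V →ₗ[ℝ] V) - (w' : V →ₗ[ℝ] V)) ⊔ (ℝ ∙ a) :
          Submodule ℝ V)) := Submodule.finrank_mono hle
    _ ≤ finrank ℝ (LinearMap.range ((LinearMap.id : V →ₗ[ℝ] V) - (w' : V →ₗ[ℝ] V)))
        + finrank ℝ (ℝ ∙ a) := Submodule.finrank_add_le_finrank_add_finrank _ _
    _ ≤ _ := by
        rw [finrank_span_singleton ha0]

/-- Upper bound: every `w ∈ G` is a product of `rank (1 - w)` reflections of `G`. -/
lemma exists_reduced (hfin : Finite G)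
    (hgen : Subgroup.closure {t : V ≃ₗ[ℝ] V | t ∈ G ∧ IsReflAuto t} = G) :
    ∀ (d : ℕ) (w : V ≃ₗ[ℝ] V), w ∈ G →
      finrank ℝ (LinearMap.range ((LinearMap.id : V →ₗ[ℝ] V) - (w : V →ₗ[ℝ] V))) = d →
      ∃ l : List (V ≃ₗ[ℝ] V), l.length = d ∧ (∀ t ∈ l, t ∈ G ∧ IsReflAuto t) ∧ l.prod = w := by
  intro d
  induction d using Nat.strong_induction_on with
  | _ d ih =>
    intro w hwG hd
    by_cases hw1 : w = 1
    · have h0 : d = 0 := by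
        rw [← hd, hw1]
        have : ((1 : V ≃ₗ[ℝ] V) : V →ₗ[ℝ] V) = LinearMap.id := rfl
        rw [this, sub_self, LinearMap.range_zero, finrank_bot]
      exact ⟨[], by rw [h0]; rfl, fun t ht => absurd ht List.not_mem_nil, by
        rw [List.prod_nil, hw1]⟩
    · obtain ⟨a, haR, haRange⟩ := exists_root_in_range hfin hgen hwG hw1
      have ha0 : a ≠ 0 := root_ne_zero haR
      set w' : V ≃ₗ[ℝ] V := rA a * w with hw'
      have hw'G : w' ∈ G := mul_mem (rA_mem_of_root haR) hwG
      have hlt : finrank ℝ (LinearMap.range ((LinearMap.id : V →ₗ[ℝ] V) - (w' : V →ₗ[ℝ] V))) < d := by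
        rw [← hd]
        exact rank_decrease (IP_of_mem hgen hwG) ha0 haRange
      obtain ⟨l', hl'len, hl'mem, hl'prod⟩ := ih _ hlt w' hw'G rfl
      have hge := rank_sub_le (w := w) ha0
      rw [hd, ← hw'] at hge
      refine ⟨rA a :: l', ?_, ?_, ?_⟩
      · rw [List.length_cons, hl'len]
        omega
      · intro t ht
        rcases List.mem_cons.1 ht with rfl | ht
        · exact ⟨rA_mem_of_root haR, a, ha0, fun x => rfl⟩
        · exact hl'mem t ht
      · rw [List.prod_cons, hl'prod, hw', ← mul_assoc, rA_mul_self, one_mul]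

/-- Lower bound: any product of reflections has at least `rank (1 - w)` factors. -/
lemma rank_le_length (l : List (V ≃ₗ[ℝ] V)) (hl : ∀ t ∈ l, IsReflAuto t)
    (w : V ≃ₗ[ℝ] V) (hw : l.prod = w) :
    finrank ℝ (LinearMap.range ((LinearMap.id : V →ₗ[ℝ] V) - (w : V →ₗ[ℝ] V))) ≤ l.length := by
  classical
  have hroots : ∃ as : List V, as.length = l.length ∧ ∀ x, l.prod x = prodS as x := by
    clear hw
    induction l with
    | nil => exact ⟨[], rfl, fun x => rfl⟩
    | cons t m ih =>
      obtain ⟨as, hlen, hprod⟩ := ih (fun t' ht' => hl t' (List.mem_cons_of_mem _ ht'))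
      obtain ⟨b, hb0, hbt⟩ := hl t (List.mem_cons_self)
      refine ⟨b :: as, by simp [hlen], fun x => ?_⟩
      rw [List.prod_cons, prodS_cons, ← hprod]
      exact hbt _
  obtain ⟨as, hlen, hprod⟩ := hroots
  have hle : LinearMap.range ((LinearMap.id : V →ₗ[ℝ] V) - (w : V →ₗ[ℝ] V))
      ≤ span ℝ {b : V | b ∈ as} := by
    rintro u ⟨x, rfl⟩
    rw [oneSub_apply, ← hw, hprod]
    exact sub_prodS_mem_span as x
  have hsetfin : {b : V | b ∈ as} = ↑as.toFinset := by
    ext b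
    simp
  calc finrank ℝ (LinearMap.range ((LinearMap.id : V →ₗ[ℝ] V) - (w : V →ₗ[ℝ] V)))
      ≤ finrank ℝ (span ℝ {b : V | b ∈ as}) := Submodule.finrank_mono hle
    _ ≤ as.toFinset.card := by
        rw [hsetfin]
        exact finrank_span_finset_le_card as.toFinset
    _ ≤ as.length := as.toFinset_card_le
    _ = l.length := hlen

end Main

end Carter

/-- Carter's Lemma: in a finite reflection group on a Euclidean space, the absolute length of
`w` equals `dim Im(id - w)`, and a product of reflections in roots `a_1, …, a_r` is reduced
if and only if the roots are linearly independent. -/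
theorem statement14 (V : Type) [NormedAddCommGroup V] [InnerProductSpace ℝ V]
    [FiniteDimensional ℝ V]
    (G : Subgroup (V ≃ₗ[ℝ] V)) (hfin : Finite G)
    (hgen : Subgroup.closure {t : V ≃ₗ[ℝ] V | t ∈ G ∧ IsReflAuto t} = G) :
    (∀ w ∈ G, absLen G w =
      Module.finrank ℝ (LinearMap.range (LinearMap.id - (w : V →ₗ[ℝ] V)))) ∧
    (∀ (r : ℕ) (a : Fin r → V) (w : V ≃ₗ[ℝ] V), w ∈ G → (∀ i, a i ≠ 0) →
      (∀ i, ∃ g ∈ G, ∀ x, g x = sR (a i) x) →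
      (∀ x, w x = (List.ofFn a).foldr sR x) →
      (absLen G w = r ↔ LinearIndependent ℝ a)) := by
  have key : ∀ w ∈ G, absLen G w =
      Module.finrank ℝ (LinearMap.range (LinearMap.id - (w : V →ₗ[ℝ] V))) := by
    intro w hwG
    obtain ⟨l, hlen, hmem, hprod⟩ := Carter.exists_reduced hfin hgen
      (Module.finrank ℝ (LinearMap.range ((LinearMap.id : V →ₗ[ℝ] V) - (w : V →ₗ[ℝ] V))))
      w hwG rfl
    have hmemset : Module.finrank ℝ
        (LinearMap.range ((LinearMap.id : V →ₗ[ℝ] V) - (w : V →ₗ[ℝ] V)))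
        ∈ {r : ℕ | ∃ l : List (V ≃ₗ[ℝ] V),
          l.length = r ∧ (∀ t ∈ l, t ∈ G ∧ IsReflAuto t) ∧ l.prod = w} :=
      ⟨l, hlen, hmem, hprod⟩
    have h1 : absLen G w ≤ Module.finrank ℝ
        (LinearMap.range ((LinearMap.id : V →ₗ[ℝ] V) - (w : V →ₗ[ℝ] V))) :=
      Nat.sInf_le hmemset
    obtain ⟨l₀, hlen₀, hmem₀, hprod₀⟩ := Nat.sInf_mem (⟨_, hmemset⟩ : Set.Nonempty _)
    have h3 := Carter.rank_le_length l₀ (fun t ht => (hmem₀ t ht).2) w hprod₀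
    exact le_antisymm h1 (le_trans h3 (le_of_eq hlen₀))
  refine ⟨key, ?_⟩
  intro r a w hwG ha0 hrefl hw
  have hwfold : ∀ x, w x = Carter.prodS (List.ofFn a) x := hw
  constructor
  · intro habs
    have hrk : Module.finrank ℝ
        (LinearMap.range ((LinearMap.id : V →ₗ[ℝ] V) - (w : V →ₗ[ℝ] V))) = r := by
      rw [← key w hwG]
      exact habs
    have hle : LinearMap.range ((LinearMap.id : V →ₗ[ℝ] V) - (w : V →ₗ[ℝ] V))
        ≤ Submodule.span ℝ (Set.range a) := by
      rintro u ⟨x, rfl⟩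
      rw [Carter.oneSub_apply, hwfold x]
      have hmem := Carter.sub_prodS_mem_span (List.ofFn a) x
      have hset : {b : V | b ∈ List.ofFn a} = Set.range a := by
        ext b
        simp [List.mem_ofFn]
      rwa [hset] at hmem
    have h1 : r ≤ Module.finrank ℝ (Submodule.span ℝ (Set.range a)) := by
      have h1' := Submodule.finrank_mono hle
      rw [hrk] at h1'
      exact h1'
    have h2 : Module.finrank ℝ (Submodule.span ℝ (Set.range a)) ≤ r := by
      have := finrank_range_le_card (R := ℝ) a
      rw [Fintype.card_fin] at this
      exact this
    rw [linearIndependent_iff_card_eq_finrank_span, Fintype.card_fin]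
    show r = Module.finrank ℝ (Submodule.span ℝ (Set.range a))
    omega
  · intro hind
    have hrk := Carter.rank_eq_of_indep a hind w hwfold
    rw [key w hwG]
    exact hrk
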